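/- For any partial n-place functions f, g₁,…,gₛ on A and any sequence of indices i₁,…,iₛ ∈ {1,…,n}, the iterated Mann composition satisfies f ∘ᵢ₁ g₁ ∘ᵢ₂ ⋯ ∘ᵢₛ gₛ = f[(I¹ ∘ᵢ₁ g₁ ⋯ ∘ᵢₛ gₛ) … (Iⁿ ∘ᵢ₁ g₁ ⋯ ∘ᵢₛ gₛ)]. -/

import Mathlib

/-- The type of partial `n`-place functions on `A`. -/
abbrev PFn (n : ℕ) (A : Type) := (Fin n → A) → Option A

/-- Menger superposition `f[g₁ … gₙ]`. -/
def Menger {n : ℕ} {A : Type} (f : PFn n A) (g : Fin n → PFn n A) : PFn n A :=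
  fun a => if h : ∀ i, (g i a).isSome then f (fun i => (g i a).get (h i)) else none

/-- The `i`-th `n`-place projector `Iⁱ`. -/
def proj {n : ℕ} {A : Type} (i : Fin n) : PFn n A := fun a => some (a i)

/-- The `i`-th Mann composition `f ∘ᵢ g`. -/
def mann {n : ℕ} {A : Type} (i : Fin n) (f g : PFn n A) : PFn n A :=
  fun a => (g a).bind fun b => f (Function.update a i b)

/-- Iterated Mann composition `f ∘ᵢ₁ g₁ ∘ᵢ₂ ⋯ ∘ᵢₛ gₛ` (left to right). -/
def iter {n : ℕ} {A : Type} (f : PFn n A) : List (Fin n × PFn n A) → PFn n A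
  | [] => f
  | p :: l => iter (mann p.1 f p.2) l

/-- `μᵢ(∘ᵢ₁ … ∘ᵢₛ g₁ … gₛ)`. -/
def mu {n : ℕ} {A : Type} (i : Fin n) : List (Fin n × PFn n A) → Option (PFn n A)
  | [] => none
  | p :: l => if p.1 = i then some (iter p.2 l) else mu i l

lemma menger_proj {n : ℕ} {A : Type} (f : PFn n A) :
    Menger f (fun k => proj k) = f := by
  funext a
  simp [Menger, proj]

lemma menger_mann {n : ℕ} {A : Type} (i : Fin n) (f g : PFn n A)
    (h : Fin n → PFn n A) :
    Menger (mann i f g) h = Menger f (fun k => Menger (mann i (proj k) g) h) := by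
  funext a
  by_cases H : ∀ j, (h j a).isSome
  · set b : Fin n → A := fun j => (h j a).get (H j) with hb
    have L : Menger (mann i f g) h a = (g b).bind fun c => f (Function.update b i c) := by
      show dite _ _ _ = _
      rw [dif_pos H]
      rfl
    have hc : ∀ k : Fin n, Menger (mann i (proj k) g) h a
        = (g b).map fun c => Function.update b i c k := by
      intro k
      show dite _ _ _ = _
      rw [dif_pos H]
      show ((g b).bind fun c => some _) = _
      cases g b <;> rfl
    cases hg : g b with
    | none =>
        have hno : ¬ ∀ k : Fin n, (Menger (mann i (proj k) g) h a).isSome := by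
          intro hk
          have := hk i
          rw [hc i, hg] at this
          simp at this
        have R : Menger f (fun k => Menger (mann i (proj k) g) h) a = none := by
          show dite _ _ _ = _
          exact dif_neg hno
        rw [L, hg, Option.bind_none, R]
    | some c =>
        have hall : ∀ k : Fin n, (Menger (mann i (proj k) g) h a).isSome := by
          intro k; rw [hc k, hg]; simp
        have hget : ∀ k : Fin n, (Menger (mann i (proj k) g) h a).get (hall k)
            = Function.update b i c k := by
          intro k
          have h2 := hc k
          rw [hg] at h2
          simp [Option.get_of_mem, h2]
        rw [L, hg, Option.bind_some]
        rw [show Menger f (fun k => Menger (mann i (proj k) g) h) a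
          = f (fun k => (Menger (mann i (proj k) g) h a).get (hall k)) from dif_pos hall]
        congr 1
        funext k
        exact (hget k).symm
  · have hk : ∀ k : Fin n, Menger (mann i (proj k) g) h a = none := by
      intro k
      exact dif_neg H
    have hno : ¬ ∀ k : Fin n, (Menger (mann i (proj k) g) h a).isSome := by
      intro hh
      have := hh i
      rw [hk i] at this
      simp at this
    have R : Menger f (fun k => Menger (mann i (proj k) g) h) a = none := by
      show dite _ _ _ = _
      exact dif_neg hno
    rw [show Menger (mann i f g) h a = none from dif_neg H, R]

/-- Proposition 1: `f ∘ᵢ₁ g₁ ⋯ ∘ᵢₛ gₛ = f[(I¹ ∘ᵢ₁ g₁ ⋯ ∘ᵢₛ gₛ) … (Iⁿ ∘ᵢ₁ g₁ ⋯ ∘ᵢₛ gₛ)]`. -/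
theorem iter_eq_menger {n : ℕ} {A : Type} (f : PFn n A)
    (l : List (Fin n × PFn n A)) :
    iter f l = Menger f (fun k => iter (proj k) l) := by
  induction l generalizing f with
  | nil => exact (menger_proj f).symm
  | cons p l ih =>
      obtain ⟨i, g⟩ := p
      show iter (mann i f g) l = Menger f (fun k => iter (mann i (proj k) g) l)
      rw [ih (mann i f g)]
      have : (fun k : Fin n => iter (mann i (proj k) g) l)
          = fun k => Menger (mann i (proj k) g) (fun k => iter (proj k) l) := by
        funext k; exact ih _
      rw [this, menger_mann]
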